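/- Let ε be a real number with 0 < ε < 1, and let x, y be complex numbers with Re x > 0 and Re y > 0. Then cosh(x/2) cosh(y/2) + ε sinh(x/2) sinh(y/2) ≠ 0. -/

import Mathlib

open Complex

lemma aux_tanh (a : ℂ) (ha : 0 < a.re) :
    Complex.cosh a ≠ 0 ∧ 0 < (Complex.sinh a / Complex.cosh a).re := by
  have hcoshd : Complex.cosh a = (Complex.exp a + Complex.exp (-a)) / 2 := rfl
  have hsinhd : Complex.sinh a = (Complex.exp a - Complex.exp (-a)) / 2 := rfl
  set w := Complex.exp (2 * a) with hw
  have h2re : 0 < (2 * a).re := by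
    simp [Complex.mul_re]; linarith
  have habs : 1 < ‖w‖ := by
    rw [hw, Complex.norm_exp]
    exact Real.one_lt_exp_iff.mpr h2re
  have hea : Complex.exp a ≠ 0 := Complex.exp_ne_zero a
  have hw2 : w = Complex.exp a * Complex.exp a := by
    rw [hw, two_mul, Complex.exp_add]
  have hneg : Complex.exp (-a) = (Complex.exp a)⁻¹ := Complex.exp_neg a
  have hwne : w + 1 ≠ 0 := by
    intro h
    have : w = -1 := by linear_combination h
    rw [this] at habs; simp at habs
  have hcosh : Complex.cosh a ≠ 0 := by
    intro h
    rw [hcoshd, hneg] at h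
    apply hwne
    rw [hw2]
    field_simp at h
    linear_combination h
  refine ⟨hcosh, ?_⟩
  have hwne' : Complex.exp a * Complex.exp a + 1 ≠ 0 := hw2 ▸ hwne
  have hcosh' : (Complex.exp a + (Complex.exp a)⁻¹) / 2 ≠ 0 := by
    rw [hcoshd, hneg] at hcosh; exact hcosh
  have key : Complex.sinh a / Complex.cosh a = (w - 1) / (w + 1) := by
    rw [hsinhd, hcoshd, hneg, hw2]
    rw [div_eq_div_iff hcosh' hwne']
    field_simp
  rw [key]
  have hns : 1 < Complex.normSq w := by
    have := Complex.sq_norm w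
    nlinarith
  have hd : 0 < Complex.normSq (w + 1) := Complex.normSq_pos.mpr hwne
  have hre : ((w - 1) / (w + 1)).re = (Complex.normSq w - 1) / Complex.normSq (w + 1) := by
    rw [Complex.div_re]
    simp only [Complex.normSq_apply, Complex.sub_re, Complex.add_re, Complex.one_re,
      Complex.sub_im, Complex.add_im, Complex.one_im, sub_zero, add_zero]
    rw [Complex.normSq_apply] at hd
    field_simp
    ring
  rw [hre]
  exact div_pos (by linarith) hd

/-- The key nonvanishing lemma (21C): for `0 < ε < 1`, the function
`cosh(x/2)cosh(y/2) + ε sinh(x/2)sinh(y/2)` does not vanish on the product of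
open right half-planes. -/
theorem stmt_9 (ε : ℝ) (hε0 : 0 < ε) (hε1 : ε < 1) (x y : ℂ)
    (hx : 0 < x.re) (hy : 0 < y.re) :
    Complex.cosh (x / 2) * Complex.cosh (y / 2) +
      (ε : ℂ) * Complex.sinh (x / 2) * Complex.sinh (y / 2) ≠ 0 := by
  have ha : 0 < (x / 2).re := by
    rw [Complex.div_re]; simp; positivity
  have hb : 0 < (y / 2).re := by
    rw [Complex.div_re]; simp; positivity
  obtain ⟨hca, hta⟩ := aux_tanh (x / 2) ha
  obtain ⟨hcb, htb⟩ := aux_tanh (y / 2) hb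
  set ta := Complex.sinh (x / 2) / Complex.cosh (x / 2) with hta'
  set tb := Complex.sinh (y / 2) / Complex.cosh (y / 2) with htb'
  intro h
  have hεc : (ε : ℂ) ≠ 0 := by exact_mod_cast hε0.ne'
  have htane : ta ≠ 0 := by
    intro h0; rw [h0] at hta; simp at hta
  have hprod : ta * tb = -(ε : ℂ)⁻¹ := by
    rw [hta', htb']
    field_simp
    linear_combination h
  have key : tb = -(ε : ℂ)⁻¹ / ta := by
    rw [eq_div_iff htane]
    linear_combination hprod
  have hre : tb.re = -ε⁻¹ * (ta.re / Complex.normSq ta) := by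
    rw [key, div_eq_mul_inv]
    have h1 : -(ε : ℂ)⁻¹ = ((-ε⁻¹ : ℝ) : ℂ) := by push_cast; ring
    rw [h1, Complex.re_ofReal_mul, Complex.inv_re]
  have hns : 0 < Complex.normSq ta := Complex.normSq_pos.mpr htane
  have hneg : tb.re < 0 := by
    rw [hre]
    have h1 : 0 < ta.re / Complex.normSq ta := by positivity
    have h2 : (0:ℝ) < ε⁻¹ := by positivity
    nlinarith
  linarith
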